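/- Let λ_0 ∈ (1/2,1) be a zero of a {0,±1} polynomial with constant term 1, and suppose the number of distinct values of A'_N(λ_0) is at most C_2 ρ^N with ρ < 2. Then the pair correlation at s = 0 satisfies R_2(0, λ_0, 2^N) ≥ C_2^{-1} (2/ρ)^N − 1, where R_2(0, λ_0, 2^N) = 2^{−N} · #{ (ω,τ) ∈ ({0,1}^N)² : ω ≠ τ, π_{λ_0}^N(ω) = π_{λ_0}^N(τ) } and π_λ^N(ω) = Σ_{n=0}^{N-1} ω_n λ^n. -/
import Mathlib


/-- `π_λ^N(ω) = Σ_{n=0}^{N-1} ω_n λ^n`. -/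
noncomputable def piN (lam : ℝ) (N : ℕ) (ω : Fin N → Bool) : ℝ :=
  ∑ n : Fin N, if ω n then lam ^ (n : ℕ) else 0

/-- The finite set `A'_N(λ)` of values of `π_λ^N`, counted without multiplicity. -/
noncomputable def AprimeF (lam : ℝ) (N : ℕ) : Finset ℝ :=
  (Finset.univ : Finset (Fin N → Bool)).image (piN lam N)

/-- Pair correlation at `s = 0`:
`R₂(0,λ,2^N) = 2^{-N} · #{(ω,τ) : ω ≠ τ, π_λ^N(ω) = π_λ^N(τ)}`. -/
noncomputable def R2zero (lam : ℝ) (N : ℕ) : ℝ :=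
  ((Finset.univ.filter (fun p : (Fin N → Bool) × (Fin N → Bool) =>
      p.1 ≠ p.2 ∧ piN lam N p.1 = piN lam N p.2)).card : ℝ) / 2 ^ N

/-- If `λ₀ ∈ (1/2,1)` is a zero of a `{0,±1}` polynomial with constant term 1 and
`|A'_N(λ₀)| ≤ C₂ ρ^N` with `ρ < 2`, then `R₂(0,λ₀,2^N) ≥ C₂⁻¹(2/ρ)^N - 1`. -/
theorem stmt_12 (lam0 : ℝ) (hlam0 : lam0 ∈ Set.Ioo (1/2 : ℝ) 1)
    (k : ℕ) (hk : 1 ≤ k) (c : ℕ → ℝ) (hc : ∀ n, c n ∈ ({-1, 0, 1} : Set ℝ))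
    (hzero : 1 + ∑ n ∈ Finset.Icc 1 k, c n * lam0 ^ n = 0)
    (C2 ρ : ℝ) (hC2 : 0 < C2) (hρ0 : 0 < ρ) (hρ : ρ < 2)
    (hcard : ∀ N : ℕ, ((AprimeF lam0 N).card : ℝ) ≤ C2 * ρ ^ N) :
    ∀ N : ℕ, C2⁻¹ * (2 / ρ) ^ N - 1 ≤ R2zero lam0 N := by
  intro N
  set f := piN lam0 N with hf
  set A := AprimeF lam0 N with hA
  set m : ℝ → ℕ := fun v => (Finset.univ.filter (fun ω : Fin N → Bool => f ω = v)).card with hm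
  have h1 : ∑ v ∈ A, m v = 2 ^ N := by
    have := Finset.card_eq_sum_card_fiberwise
      (f := f) (s := (Finset.univ : Finset (Fin N → Bool))) (t := A)
      (fun x _ => Finset.mem_image_of_mem f (Finset.mem_univ x))
    simpa [Finset.card_univ] using this.symm
  -- equal-value pairs
  have h2 : (Finset.univ.filter (fun p : (Fin N → Bool) × (Fin N → Bool) =>
      f p.1 = f p.2)).card = ∑ v ∈ A, m v * m v := by
    rw [Finset.card_eq_sum_card_fiberwise
      (f := fun p : (Fin N → Bool) × (Fin N → Bool) => f p.1) (t := A)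
      (fun p hp => Finset.mem_image_of_mem f (Finset.mem_univ p.1))]
    refine Finset.sum_congr rfl fun v hv => ?_
    have : ((Finset.univ.filter (fun p : (Fin N → Bool) × (Fin N → Bool) => f p.1 = f p.2)).filter
        (fun p => f p.1 = v)) =
        (Finset.univ.filter (fun ω : Fin N → Bool => f ω = v)) ×ˢ
        (Finset.univ.filter (fun ω : Fin N → Bool => f ω = v)) := by
      ext p
      simp only [Finset.mem_filter, Finset.mem_product, Finset.mem_univ, true_and]
      constructor
      · rintro ⟨h12, h1v⟩; exact ⟨h1v, h12 ▸ h1v⟩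
      · rintro ⟨h1v, h2v⟩; exact ⟨h1v.trans h2v.symm, h1v⟩
    rw [this, Finset.card_product]
  -- diagonal
  have h3 : (Finset.univ.filter (fun p : (Fin N → Bool) × (Fin N → Bool) =>
      p.1 = p.2 ∧ f p.1 = f p.2)).card = 2 ^ N := by
    have : (Finset.univ.filter (fun p : (Fin N → Bool) × (Fin N → Bool) =>
        p.1 = p.2 ∧ f p.1 = f p.2)) = Finset.univ.image (fun ω : Fin N → Bool => (ω, ω)) := by
      ext p
      simp only [Finset.mem_filter, Finset.mem_univ, true_and, Finset.mem_image]
      constructor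
      · rintro ⟨h, -⟩; obtain ⟨a, b⟩ := p; cases h; exact ⟨a, rfl⟩
      · rintro ⟨a, rfl⟩; exact ⟨rfl, rfl⟩
    rw [this, Finset.card_image_of_injective _ (fun a b h => (Prod.mk.injEq _ _ _ _).mp h |>.1)]
    simp [Finset.card_univ]
  have h4 : (Finset.univ.filter (fun p : (Fin N → Bool) × (Fin N → Bool) =>
      p.1 ≠ p.2 ∧ f p.1 = f p.2)).card + 2 ^ N = ∑ v ∈ A, m v * m v := by
    rw [← h2, ← h3]
    rw [← Finset.card_filter_add_card_filter_not
      (s := Finset.univ.filter (fun p : (Fin N → Bool) × (Fin N → Bool) => f p.1 = f p.2))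
      (p := fun p => p.1 = p.2)]
    rw [Nat.add_comm]
    congr 1 <;> · rw [Finset.filter_filter]; congr 1; ext p; simp only [Finset.mem_filter]; tauto
  -- Cauchy-Schwarz
  have hAne : A.Nonempty := ⟨f (fun _ => false), Finset.mem_image_of_mem f (Finset.mem_univ _)⟩
  have hCS : ((2:ℝ) ^ N) ^ 2 ≤ (A.card : ℝ) * ∑ v ∈ A, (m v : ℝ) ^ 2 := by
    have := sq_sum_le_card_mul_sum_sq (s := A) (f := fun v => (m v : ℝ))
    calc ((2:ℝ) ^ N) ^ 2 = (∑ v ∈ A, (m v : ℝ)) ^ 2 := by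
          rw [← Nat.cast_sum, h1]; push_cast; ring
      _ ≤ _ := this
  have hApos : (0:ℝ) < A.card := by exact_mod_cast Finset.card_pos.mpr hAne
  have hAle : (A.card : ℝ) ≤ C2 * ρ ^ N := hcard N
  have hden : (0:ℝ) < C2 * ρ ^ N := mul_pos hC2 (pow_pos hρ0 N)
  have hsumnn : (0:ℝ) ≤ ∑ v ∈ A, (m v : ℝ) ^ 2 :=
    Finset.sum_nonneg fun v _ => sq_nonneg _
  have hS : (2:ℝ) ^ (2 * N) / (C2 * ρ ^ N) ≤ ∑ v ∈ A, (m v : ℝ) ^ 2 := by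
    rw [div_le_iff₀ hden]
    calc (2:ℝ) ^ (2 * N) = ((2:ℝ) ^ N) ^ 2 := by ring
      _ ≤ (A.card : ℝ) * ∑ v ∈ A, (m v : ℝ) ^ 2 := hCS
      _ ≤ (C2 * ρ ^ N) * ∑ v ∈ A, (m v : ℝ) ^ 2 :=
          mul_le_mul_of_nonneg_right hAle hsumnn
      _ = (∑ v ∈ A, (m v : ℝ) ^ 2) * (C2 * ρ ^ N) := mul_comm _ _
  -- conclude
  have hcardR : ((Finset.univ.filter (fun p : (Fin N → Bool) × (Fin N → Bool) =>
      p.1 ≠ p.2 ∧ f p.1 = f p.2)).card : ℝ)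
      = (∑ v ∈ A, (m v : ℝ) ^ 2) - 2 ^ N := by
    have := congrArg (Nat.cast : ℕ → ℝ) h4
    push_cast at this
    simp only [sq]
    linarith
  unfold R2zero
  have h2N : (0:ℝ) < 2 ^ N := by positivity
  rw [sub_le_iff_le_add, div_add' _ _ _ (ne_of_gt h2N), le_div_iff₀ h2N]
  rw [hcardR]
  have heq : C2⁻¹ * (2 / ρ) ^ N * 2 ^ N = (2:ℝ) ^ (2 * N) / (C2 * ρ ^ N) := by
    rw [two_mul, pow_add, div_pow, div_eq_mul_inv, div_eq_mul_inv, mul_inv]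
    ring
  linarith [hS, heq]
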